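/- Let V be a finite-dimensional real vector space, K ⊆ V a convex cone containing 0, and ū ∈ V. For a positive integer n, let M(n) := { f : Fin n → V | (∀ y, f(y) ∈ K) and \sum_y f(y) = ū }, a convex subset of the function space Fin n → V. Suppose e : Fin n → V is a family of nonzero vectors each lying on an extreme ray of K (i.e., e(y) ∈ K and whenever a, b ∈ K satisfy a + b = e(y), then a and b are nonnegative scalar multiples of e(y)), and suppose there exists a linear functional u* : V → ℝ with u*(e(y)) = 1 for all y. Let p : Fin n → ℝ satisfy p(y) > 0 for all y and \sum_y p(y) • e(y) = ū. Then the function f := (y ↦ p(y) • e(y)) is an extreme point of M(n) if and only if the family (e(y))_{y ∈ Fin n} is linearly independent. -/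

import Mathlib

/-- Extremality criterion for measurements in a generalized probabilistic theory:
a measurement supported on extremal normalized effects is an extreme point of the
set of measurements if and only if its supporting effects are linearly independent. -/
theorem extremal_measurement_iff_linearIndependent
    {V : Type*} [AddCommGroup V] [Module ℝ V] [FiniteDimensional ℝ V]
    (K : ConvexCone ℝ V) (hK0 : (0 : V) ∈ K) (ubar : V)
    (n : ℕ) (hn : 0 < n) (e : Fin n → V)
    (heK : ∀ y, e y ∈ K) (heNe : ∀ y, e y ≠ 0)
    (hExt : ∀ y, ∀ a b : V, a ∈ K → b ∈ K → a + b = e y →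
      (∃ c : ℝ, 0 ≤ c ∧ a = c • e y) ∧ (∃ c : ℝ, 0 ≤ c ∧ b = c • e y))
    (ustar : V →ₗ[ℝ] ℝ) (hustar : ∀ y, ustar (e y) = 1)
    (p : Fin n → ℝ) (hp : ∀ y, 0 < p y) (hsum : ∑ y, p y • e y = ubar) :
    (fun y => p y • e y) ∈
      Set.extremePoints ℝ {f : Fin n → V | (∀ y, f y ∈ K) ∧ ∑ y, f y = ubar} ↔
    LinearIndependent ℝ e := by
  haveI : Nonempty (Fin n) := ⟨⟨0, hn⟩⟩
  have hmem : (fun y => p y • e y) ∈ {f : Fin n → V | (∀ y, f y ∈ K) ∧ ∑ y, f y = ubar} :=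
    ⟨fun y => K.smul_mem (hp y) (heK y), hsum⟩
  constructor
  · -- extreme point → linearly independent
    rintro ⟨-, hext⟩
    rw [Fintype.linearIndependent_iff]
    by_contra hcon
    push_neg at hcon
    obtain ⟨q, hq0, y₀, hy₀⟩ := hcon
    set ε : ℝ := Finset.univ.inf' Finset.univ_nonempty (fun y => p y / (|q y| + 1)) with hεdef
    have hεpos : 0 < ε := by
      rw [hεdef, Finset.lt_inf'_iff]
      intro y _
      exact div_pos (hp y) (by positivity)
    have hεle : ∀ y, ε ≤ p y / (|q y| + 1) := fun y =>
      Finset.inf'_le _ (Finset.mem_univ y)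
    have hbound : ∀ y, ε * |q y| < p y := by
      intro y
      calc ε * |q y| ≤ (p y / (|q y| + 1)) * |q y| :=
            mul_le_mul_of_nonneg_right (hεle y) (abs_nonneg _)
        _ < p y := by
            rw [div_mul_eq_mul_div, div_lt_iff₀ (by positivity)]
            nlinarith [abs_nonneg (q y), hp y]
    have habs : ∀ y, |ε * q y| < p y := by
      intro y
      rw [abs_mul, abs_of_pos hεpos]
      exact hbound y
    have hpos1 : ∀ y, 0 < p y + ε * q y := by
      intro y
      have h1 := neg_abs_le (ε * q y)
      have h2 := habs y
      linarith
    have hpos2 : ∀ y, 0 < p y - ε * q y := by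
      intro y
      have h1 := le_abs_self (ε * q y)
      have h2 := habs y
      linarith
    set g : Fin n → V := fun y => (p y + ε * q y) • e y with hgdef
    set h : Fin n → V := fun y => (p y - ε * q y) • e y with hhdef
    have hsumq : ∑ y, (ε * q y) • e y = 0 := by
      have : ∑ y, (ε * q y) • e y = ε • ∑ y, q y • e y := by
        rw [Finset.smul_sum]
        exact Finset.sum_congr rfl fun y _ => by rw [smul_smul]
      rw [this, hq0, smul_zero]
    have hg : g ∈ {f : Fin n → V | (∀ y, f y ∈ K) ∧ ∑ y, f y = ubar} := by
      refine ⟨fun y => K.smul_mem (hpos1 y) (heK y), ?_⟩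
      simp only [hgdef, add_smul]
      rw [Finset.sum_add_distrib, hsum, hsumq, add_zero]
    have hh : h ∈ {f : Fin n → V | (∀ y, f y ∈ K) ∧ ∑ y, f y = ubar} := by
      refine ⟨fun y => K.smul_mem (hpos2 y) (heK y), ?_⟩
      simp only [hhdef, sub_smul]
      rw [Finset.sum_sub_distrib, hsum, hsumq, sub_zero]
    have hseg : (fun y => p y • e y) ∈ openSegment ℝ g h := by
      refine ⟨1/2, 1/2, by norm_num, by norm_num, by norm_num, ?_⟩
      funext y
      simp only [Pi.add_apply, Pi.smul_apply, hgdef, hhdef]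
      module
    have hg1 := hext hg hh hseg
    have h2 : (p y₀ + ε * q y₀) • e y₀ = p y₀ • e y₀ := congrFun hg1 y₀
    rw [add_smul] at h2
    have h3 : (ε * q y₀) • e y₀ = 0 := by
      have h2' := h2
      nth_rewrite 2 [← add_zero (p y₀ • e y₀)] at h2'
      exact add_left_cancel h2'
    rcases smul_eq_zero.mp h3 with h4 | h4
    · exact (mul_ne_zero hεpos.ne' hy₀) h4
    · exact heNe y₀ h4
  · -- linearly independent → extreme point
    intro hli
    refine ⟨hmem, ?_⟩
    have key : ∀ t s : ℝ, ∀ x₁ x₂ : Fin n → V, 0 < t → 0 < s →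
        (∀ y, x₁ y ∈ K) → (∀ y, x₂ y ∈ K) →
        (t • x₁ + s • x₂ = fun y => p y • e y) →
        (∑ y, x₁ y = ubar) → x₁ = fun y => p y • e y := by
      intro t s x₁ x₂ ht hs hK1 hK2 heq hsum1
      have hcoef : ∀ y, ∃ d : ℝ, x₁ y = d • e y := by
        intro y
        have h0 : t • x₁ y + s • x₂ y = p y • e y := by
          have := congrFun heq y
          simpa using this
        have h1 : (t / p y) • x₁ y + (s / p y) • x₂ y = e y := by
          rw [div_eq_inv_mul, div_eq_inv_mul, mul_smul, mul_smul, ← smul_add, h0,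
            smul_smul, inv_mul_cancel₀ (hp y).ne', one_smul]
        obtain ⟨⟨c, hc, hcc⟩, -⟩ := hExt y _ _
          (K.smul_mem (div_pos ht (hp y)) (hK1 y))
          (K.smul_mem (div_pos hs (hp y)) (hK2 y)) h1
        refine ⟨(p y / t) * c, ?_⟩
        have hinv : (p y / t) * (t / p y) = 1 := by
          field_simp
          exact div_self (hp y).ne'
        calc x₁ y = (p y / t) • ((t / p y) • x₁ y) := by
              rw [smul_smul, hinv, one_smul]
          _ = ((p y / t) * c) • e y := by rw [hcc, smul_smul]
      choose d hd using hcoef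
      have hd_sum : ∑ y, d y • e y = ubar := by
        rw [← hsum1]
        exact Finset.sum_congr rfl fun y _ => (hd y).symm
      have hsum2 : ∑ y, (d y - p y) • e y = 0 := by
        simp only [sub_smul]
        rw [Finset.sum_sub_distrib, hd_sum, hsum, sub_self]
      have hzero := Fintype.linearIndependent_iff.mp hli (fun y => d y - p y) hsum2
      funext y
      rw [hd y, sub_eq_zero.mp (hzero y)]
    rintro x₁ hx₁ x₂ hx₂ ⟨a, b, ha, hb, hab, hx⟩
    exact key a b x₁ x₂ ha hb hx₁.1 hx₂.1 hx hx₁.2
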